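/- Let Q be a bounded quasinilpotent operator on a complex Banach space X. Suppose z ∈ ℂ, z ≠ 0, is such that sup_{j∈ℕ} ‖(I − zQ)^{-j}‖ < ∞ and sup_{j∈ℕ} (j+1)^{1/2} ‖zQ(I − zQ)^j‖ < ∞ (where (I−zQ) plays the role of T(−z)). Then Q = 0. -/
import Mathlib


theorem gelfand_hille_type
    {X : Type*} [NormedAddCommGroup X] [NormedSpace ℂ X] [CompleteSpace X]
    (Q : X →L[ℂ] X) (hQ : spectrum ℂ Q = {0}) (z : ℂ) (hz : z ≠ 0)
    (h1 : ∃ C : ℝ, ∀ j : ℕ, ‖(Ring.inverse (1 - z • Q)) ^ j‖ ≤ C)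
    (h2 : ∃ C : ℝ, ∀ j : ℕ,
        Real.sqrt (j + 1) * ‖(z • Q) * (1 - z • Q) ^ j‖ ≤ C) :
    Q = 0 := by
  nontriviality X
  obtain ⟨C₁, h1⟩ := h1
  obtain ⟨C₂, h2⟩ := h2
  set T : X →L[ℂ] X := 1 - z • Q with hT
  have hspec : spectrum ℂ (z • Q) = {0} := by
    rw [spectrum.smul_eq_smul z Q (by rw [hQ]; exact Set.singleton_nonempty 0), hQ]
    simp
  have hu : IsUnit T := by
    have h1n : (1 : ℂ) ∉ spectrum ℂ (z • Q) := by rw [hspec]; simp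
    rw [spectrum.notMem_iff] at h1n
    rw [hT]
    simpa using h1n
  have hmul := Ring.inverse_mul_cancel T hu
  have hmul' := Ring.mul_inverse_cancel T hu
  have hc : Commute (Ring.inverse T) T := by rw [Commute, SemiconjBy, hmul, hmul']
  have hinv : ∀ j : ℕ, (Ring.inverse T) ^ j * T ^ j = 1 := by
    intro j; rw [← hc.mul_pow, hmul, one_pow]
  have hcomm : Commute (z • Q) T := (Commute.one_right (z • Q)).sub_right (Commute.refl _)
  have hC₁ : 0 ≤ C₁ := le_trans (norm_nonneg _) (h1 0)
  have key : ∀ j : ℕ, ‖z • Q‖ * Real.sqrt (j + 1) ≤ C₁ * C₂ := by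
    intro j
    have heq : z • Q = (Ring.inverse T) ^ j * ((z • Q) * T ^ j) := by
      rw [(hcomm.pow_right j).eq, ← mul_assoc, hinv j, one_mul]
    have hb : ‖z • Q‖ ≤ ‖(Ring.inverse T) ^ j‖ * ‖(z • Q) * T ^ j‖ := by
      conv_lhs => rw [heq]
      exact norm_mul_le _ _
    calc ‖z • Q‖ * Real.sqrt (j + 1)
        ≤ (‖(Ring.inverse T) ^ j‖ * ‖(z • Q) * T ^ j‖) * Real.sqrt (j + 1) :=
          mul_le_mul_of_nonneg_right hb (Real.sqrt_nonneg _)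
      _ = ‖(Ring.inverse T) ^ j‖ * (Real.sqrt (j + 1) * ‖(z • Q) * T ^ j‖) := by ring
      _ ≤ C₁ * C₂ := mul_le_mul (h1 j) (h2 j)
            (mul_nonneg (Real.sqrt_nonneg _) (norm_nonneg _)) hC₁
  by_contra hQ0
  have hzQ : z • Q ≠ 0 := by
    intro h
    rcases smul_eq_zero.mp h with h | h
    · exact hz h
    · exact hQ0 h
  have hc0 : 0 < ‖z • Q‖ := norm_pos_iff.mpr hzQ
  set K : ℝ := C₁ * C₂ / ‖z • Q‖ with hK
  obtain ⟨n, hn⟩ := exists_nat_gt (K ^ 2)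
  have hKn : K < Real.sqrt (n + 1) := by
    have hCC : 0 ≤ C₁ * C₂ := le_trans (by positivity) (key 0)
    have hK0 : 0 ≤ K := by positivity
    rw [Real.lt_sqrt hK0]
    linarith
  have := key n
  rw [hK] at hKn
  have h2' : C₁ * C₂ < ‖z • Q‖ * Real.sqrt (n + 1) := by
    rw [div_lt_iff₀ hc0] at hKn
    linarith [hKn]
  linarith
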